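/- Let g : ℝ → ℝ be convex on (0,∞) and let g'₋ denote its left derivative. Then the function x ↦ x·g'₋(x) - g(x) is nondecreasing on (0,∞). -/

import Mathlib

open Set Filter

/-- A function convex on `Ioi 0` is left-differentiable at every point of `Ioi 0`. -/
lemma aux_left_diff (g : ℝ → ℝ) (hconv : ConvexOn ℝ (Set.Ioi 0) g) {x : ℝ} (hx : x ∈ Set.Ioi 0) :
    DifferentiableWithinAt ℝ g (Set.Iio x) x := by
  have hx0 : (0 : ℝ) < x := hx
  have hmono : MonotoneOn (slope g x) (Ioo 0 x) := by
    intro a ha b hb hab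
    simp only [slope_def_field]
    exact hconv.secant_mono hx ha.1 hb.1 ha.2.ne hb.2.ne hab
  have hbdd : BddAbove (slope g x '' Ioo 0 x) := by
    refine ⟨slope g x (x + 1), ?_⟩
    rintro _ ⟨t, ht, rfl⟩
    simp only [slope_def_field]
    exact hconv.secant_mono hx ht.1 (by linarith : (0:ℝ) < x + 1) ht.2.ne
      (by linarith : x + 1 ≠ x) (by linarith [ht.2])
  have hne : (Ioo (0:ℝ) x).Nonempty := nonempty_Ioo.2 hx0
  have htend := MonotoneOn.tendsto_nhdsWithin_Ioo_left hne hmono hbdd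
  have : HasDerivWithinAt g (sSup (slope g x '' Ioo 0 x)) (Set.Iio x) x := by
    rw [hasDerivWithinAt_iff_tendsto_slope' notMem_Iio_self]
    exact htend
  exact this.differentiableWithinAt

/-- The left derivative of a convex function is at most the slope of a secant to the right. -/
lemma aux_left_deriv_le_slope (g : ℝ → ℝ) (hconv : ConvexOn ℝ (Set.Ioi 0) g)
    {x y f' : ℝ} (hx : x ∈ Set.Ioi 0) (hy : y ∈ Set.Ioi 0) (hxy : x < y)
    (hf' : HasDerivWithinAt g f' (Set.Iio x) x) : f' ≤ slope g x y := by
  apply le_of_tendsto <| (hasDerivWithinAt_iff_tendsto_slope' notMem_Iio_self).mp hf'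
  have hx0 : (0 : ℝ) < x := hx
  rw [eventually_nhdsWithin_iff]
  filter_upwards [eventually_gt_nhds hx0] with t ht0 (ht : t < x)
  simp only [slope_def_field]
  exact hconv.secant_mono hx ht0 hy ht.ne hxy.ne' (by linarith)

theorem stmt_12 (g : ℝ → ℝ) (hconv : ConvexOn ℝ (Set.Ioi 0) g) :
    MonotoneOn (fun x => x * derivWithin g (Set.Iio x) x - g x) (Set.Ioi 0) := by
  intro a ha b hb hab
  rcases eq_or_lt_of_le hab with rfl | hab'
  · exact le_refl _
  have hda := aux_left_diff g hconv ha
  have hdb := aux_left_diff g hconv hb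
  have h1 : slope g a b ≤ derivWithin g (Set.Iio b) b :=
    hconv.slope_le_leftDeriv ha hb hab' hdb
  have h2 : derivWithin g (Set.Iio a) a ≤ slope g a b :=
    aux_left_deriv_le_slope g hconv ha hb hab' hda.hasDerivWithinAt
  have ha0 : (0 : ℝ) < a := ha
  have hb0 : (0 : ℝ) < b := hb
  have hs : (b - a) * slope g a b = g b - g a := by
    rw [slope_def_field]
    rw [mul_div_assoc']
    exact mul_div_cancel_left₀ _ (sub_ne_zero.mpr hab'.ne')
  have h3 : a * derivWithin g (Set.Iio a) a ≤ a * slope g a b :=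
    mul_le_mul_of_nonneg_left h2 ha0.le
  have h4 : b * slope g a b ≤ b * derivWithin g (Set.Iio b) b :=
    mul_le_mul_of_nonneg_left h1 hb0.le
  simp only
  nlinarith [hs, h3, h4]
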